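/- Let μ be a Borel probability measure on Ω absolutely continuous with respect to d-dimensional Lebesgue measure, let ν be a Borel probability measure on Ω, let u0 be a Kantorovich potential and T0 an optimal transport map for W1(μ,ν), and let η ≥ 0 satisfy η < essinf_μ |x − T0(x)| (the μ-essential infimum of x ↦ |x − T0(x)|). Then for μ-almost every x0 ∈ Ω, the minimization problem min_{x ∈ Ω} (½|x − x0|² + η·u0(x)) has a unique solution, given by x1 = x0 − η∇u0(x0). -/

import Mathlib

open MeasureTheory Set Metric
open scoped ENNReal NNReal

noncomputable section

/-- The Wasserstein 1 distance between two Borel probability measures, defined as the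
infimum of the transport cost over all couplings. -/
def W1 {d : ℕ} (μ ν : Measure (EuclideanSpace ℝ (Fin d))) : ℝ :=
  sInf {c | ∃ γ : Measure (EuclideanSpace ℝ (Fin d) × EuclideanSpace ℝ (Fin d)),
    IsProbabilityMeasure γ ∧ γ.map Prod.fst = μ ∧ γ.map Prod.snd = ν ∧
    c = ∫ p, ‖p.1 - p.2‖ ∂γ}

/-- `u0` is a Kantorovich potential for `W1(μ, ν)`: it is 1-Lipschitz on Ω and achieves
the supremum in the dual problem. -/
def IsKantorovichPotential {d : ℕ} (Ω : Set (EuclideanSpace ℝ (Fin d)))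
    (μ ν : Measure (EuclideanSpace ℝ (Fin d))) (u0 : EuclideanSpace ℝ (Fin d) → ℝ) : Prop :=
  LipschitzOnWith 1 u0 Ω ∧
  ∀ u : EuclideanSpace ℝ (Fin d) → ℝ, LipschitzOnWith 1 u Ω →
    ∫ x, u x ∂μ - ∫ x, u x ∂ν ≤ ∫ x, u0 x ∂μ - ∫ x, u0 x ∂ν

/-- `T` is an optimal transport map for `W1(μ, ν)`: a Borel map from Ω to Ω pushing μ
forward to ν whose transport cost equals `W1 μ ν`. -/
def IsOptimalMap {d : ℕ} (Ω : Set (EuclideanSpace ℝ (Fin d)))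
    (μ ν : Measure (EuclideanSpace ℝ (Fin d)))
    (T : EuclideanSpace ℝ (Fin d) → EuclideanSpace ℝ (Fin d)) : Prop :=
  Measurable T ∧ MapsTo T Ω Ω ∧ μ.map T = ν ∧ ∫ x, ‖x - T x‖ ∂μ = W1 μ ν

section Aux

variable {d : ℕ}

local notation "E" => EuclideanSpace ℝ (Fin d)

lemma sub_le_of_lipOn {u : E → ℝ} {Ω : Set E} (h : LipschitzOnWith 1 u Ω)
    {a b : E} (ha : a ∈ Ω) (hb : b ∈ Ω) : u a - u b ≤ ‖a - b‖ := by
  have := h.dist_le_mul a ha b hb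
  rw [Real.dist_eq, dist_eq_norm] at this
  have h2 := (abs_le.1 (by simpa using this)).2
  linarith [h2]


lemma deriv_dir {f : E → ℝ} {L : E →L[ℝ] ℝ} {x0 v : E} {c δ : ℝ} (hδ : 0 < δ)
    (hf : HasFDerivAt f L x0) (hseg : ∀ t ∈ Icc (0:ℝ) δ, f (x0 + t • v) = f x0 + t * c) :
    L v = c := by
  have hcurve : HasDerivAt (fun t : ℝ => x0 + t • v) v 0 := by
    simpa using ((hasDerivAt_id (0:ℝ)).smul_const v).const_add x0
  have h1 : HasDerivAt (fun t : ℝ => f (x0 + t • v)) (L v) 0 := by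
    have hf' : HasFDerivAt f L (x0 + (0:ℝ) • v) := by simpa using hf
    exact hf'.comp_hasDerivAt 0 hcurve
  have h2 : HasDerivWithinAt (fun t : ℝ => f x0 + t * c) (L v) (Ici (0:ℝ)) 0 := by
    refine (h1.hasDerivWithinAt).congr_of_eventuallyEq ?_ (by simpa using (hseg 0 ⟨le_refl _, hδ.le⟩).symm)
    filter_upwards [Icc_mem_nhdsGE_of_mem (⟨le_refl (0:ℝ), hδ⟩ : (0:ℝ) ∈ Ico (0:ℝ) δ)] with t ht
    exact (hseg t ht).symm
  have h3 : HasDerivWithinAt (fun t : ℝ => f x0 + t * c) c (Ici (0:ℝ)) 0 :=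
    ((hasDerivAt_mul_const c).const_add (f x0)).hasDerivWithinAt
  have := h2.derivWithin (uniqueDiffOn_Ici 0 0 self_mem_Ici)
  rw [h3.derivWithin (uniqueDiffOn_Ici 0 0 self_mem_Ici)] at this
  exact this.symm


lemma null_bad_set {α : Type*} [MetricSpace α] [SecondCountableTopology α] [MeasurableSpace α]
    [OpensMeasurableSpace α] (γ : Measure α) :
    γ {p | ∃ ε > 0, γ (ball p ε) = 0} = 0 := by
  set T := {p | ∃ ε > 0, γ (ball p ε) = 0} with hT
  have : ∀ p : T, ∃ ε > 0, γ (ball (p : α) ε) = 0 := fun p => p.2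
  choose ε hε hba using this
  have hsub : T ⊆ ⋃ p : T, ball (p : α) (ε p) := by
    intro p hp
    exact mem_iUnion.2 ⟨⟨p, hp⟩, mem_ball_self (hε ⟨p, hp⟩)⟩
  obtain ⟨I, hIc, hIU⟩ := TopologicalSpace.isOpen_iUnion_countable
    (fun p : T => ball (p : α) (ε p)) (fun p => isOpen_ball)
  have : γ (⋃ p : T, ball (p : α) (ε p)) = 0 := by
    rw [← hIU]
    exact (measure_biUnion_null_iff hIc).2 fun p _ => hba p
  exact measure_mono_null hsub this


lemma exists_potential (S : Set (E × E)) (p0 : E × E) (hp0 : p0 ∈ S)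
    (hS : ∀ (n : ℕ) (q : ℕ → E × E), (∀ i ≤ n, q i ∈ S) → q 0 = p0 →
      ∑ i ∈ Finset.range (n+1), ‖(q i).1 - (q i).2‖ ≤
        (∑ i ∈ Finset.range n, ‖(q (i+1)).1 - (q i).2‖) + ‖(q 0).1 - (q n).2‖) :
    ∃ φ : E → ℝ, LipschitzWith 1 φ ∧ ∀ p ∈ S, ‖p.1 - p.2‖ ≤ φ p.1 - φ p.2 := by
  classical
  -- chains
  let Chain := {c : ℕ × (ℕ → E × E) // c.2 0 = p0 ∧ ∀ i ≤ c.1, c.2 i ∈ S}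
  have hne : Nonempty Chain := ⟨⟨(0, fun _ => p0), rfl, fun i _ => hp0⟩⟩
  -- value of a chain at a point
  let V : E → Chain → ℝ := fun x c =>
    (∑ i ∈ Finset.range c.1.1, (‖(c.1.2 (i+1)).1 - (c.1.2 i).2‖ - ‖(c.1.2 i).1 - (c.1.2 i).2‖))
      + (‖x - (c.1.2 c.1.1).2‖ - ‖(c.1.2 c.1.1).1 - (c.1.2 c.1.1).2‖)
  -- lower bound
  have hlb : ∀ (x : E) (c : Chain), -‖x - p0.1‖ ≤ V x c := by
    intro x c
    obtain ⟨⟨n, q⟩, hq0, hqS⟩ := c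
    have key := hS n q hqS hq0
    have hsplit : ∑ i ∈ Finset.range (n+1), ‖(q i).1 - (q i).2‖
        = (∑ i ∈ Finset.range n, ‖(q i).1 - (q i).2‖) + ‖(q n).1 - (q n).2‖ :=
      Finset.sum_range_succ _ n
    have hVxc : V x ⟨⟨n, q⟩, hq0, hqS⟩
        = (∑ i ∈ Finset.range n, ‖(q (i+1)).1 - (q i).2‖)
          - (∑ i ∈ Finset.range n, ‖(q i).1 - (q i).2‖)
          + (‖x - (q n).2‖ - ‖(q n).1 - (q n).2‖) := by
      simp only [V, Finset.sum_sub_distrib]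
    have htri : ‖p0.1 - (q n).2‖ ≤ ‖p0.1 - x‖ + ‖x - (q n).2‖ := by
      have := norm_add_le (p0.1 - x) (x - (q n).2)
      simpa using this
    have hnorm : ‖p0.1 - x‖ = ‖x - p0.1‖ := norm_sub_rev _ _
    simp only at hq0
    rw [hq0] at key
    rw [hVxc]
    linarith [key, hsplit]
  -- the potential
  let φ : E → ℝ := fun x => ⨅ c : Chain, V x c
  have hbdd : ∀ x : E, BddBelow (Set.range (fun c : Chain => V x c)) := by
    intro x
    exact ⟨-‖x - p0.1‖, by rintro r ⟨c, rfl⟩; exact hlb x c⟩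
  have hVlip : ∀ (x y : E) (c : Chain), V x c ≤ V y c + ‖x - y‖ := by
    intro x y c
    have : ‖x - (c.1.2 c.1.1).2‖ ≤ ‖x - y‖ + ‖y - (c.1.2 c.1.1).2‖ := by
      have := norm_add_le (x - y) (y - (c.1.2 c.1.1).2)
      simpa using this
    simp only [V]
    linarith
  have hφle : ∀ (x : E) (c : Chain), φ x ≤ V x c := fun x c => ciInf_le (hbdd x) c
  have hφlip : LipschitzWith 1 φ := by
    apply LipschitzWith.of_le_add
    intro x y
    rw [dist_eq_norm]
    have : φ x - ‖x - y‖ ≤ φ y := by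
      apply le_ciInf
      intro c
      have h1 := hφle x c
      have h2 := hVlip x y c
      linarith
    linarith
  refine ⟨φ, hφlip, ?_⟩
  rintro ⟨a, b⟩ hab
  simp only
  have key : ∀ c : Chain, φ b ≤ V a c - ‖a - b‖ := by
    intro c
    obtain ⟨⟨n, q⟩, hq0, hqS⟩ := c
    -- extended chain
    let q' : ℕ → E × E := fun i => if i ≤ n then q i else (a, b)
    have hq'0 : q' 0 = p0 := by simp only [q', if_pos (Nat.zero_le n)]; exact hq0
    have hq'S : ∀ i ≤ n + 1, q' i ∈ S := by
      intro i hi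
      by_cases h : i ≤ n
      · simp only [q', if_pos h]; exact hqS i h
      · simp only [q', if_neg h]; exact hab
    have hc' : (⟨(n+1, q'), hq'0, hq'S⟩ : Chain) ∈ (Set.univ : Set Chain) := trivial
    have hval : V b ⟨(n+1, q'), hq'0, hq'S⟩ = V a ⟨⟨n, q⟩, hq0, hqS⟩ - ‖a - b‖ := by
      simp only [V]
      have hqn1 : q' (n+1) = (a, b) := by simp [q']
      have hsum : ∑ i ∈ Finset.range (n+1), (‖(q' (i+1)).1 - (q' i).2‖ - ‖(q' i).1 - (q' i).2‖)
          = (∑ i ∈ Finset.range n, (‖(q (i+1)).1 - (q i).2‖ - ‖(q i).1 - (q i).2‖))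
            + (‖a - (q n).2‖ - ‖(q n).1 - (q n).2‖) := by
        rw [Finset.sum_range_succ]
        congr 1
        · apply Finset.sum_congr rfl
          intro i hi
          have hi' : i < n := Finset.mem_range.1 hi
          have h1 : q' i = q i := by simp [q', Nat.le_of_lt hi']
          have h2 : q' (i+1) = q (i+1) := by simp [q', Nat.succ_le_of_lt hi']
          rw [h1, h2]
        · have h1 : q' n = q n := by simp [q']
          rw [h1, hqn1]
      rw [hsum, hqn1]
      simp
      ring
    calc φ b ≤ V b ⟨(n+1, q'), hq'0, hq'S⟩ := hφle b _
    _ = V a ⟨⟨n, q⟩, hq0, hqS⟩ - ‖a - b‖ := hval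
  have : φ b + ‖a - b‖ ≤ φ a := by
    have : φ b + ‖a - b‖ ≤ ⨅ c : Chain, V a c := by
      apply le_ciInf
      intro c
      linarith [key c]
    exact this
  linarith


lemma map_finset_sum_meas {ι : Type*} (s : Finset ι) (μs : ι → Measure (E × E))
    {g : E × E → E} (hg : Measurable g) :
    (∑ i ∈ s, μs i).map g = ∑ i ∈ s, (μs i).map g := by
  classical
  induction s using Finset.induction with
  | empty => simp
  | insert _ _ h ih =>
    rw [Finset.sum_insert h, Finset.sum_insert h, Measure.map_add _ _ hg, ih]


set_option maxHeartbeats 1000000 in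
lemma cm_of_optimal {γ : Measure (E × E)} [IsProbabilityMeasure γ]
    {R : ℝ} (hbd : ∀ᵐ p ∂γ, ‖p.1 - p.2‖ ≤ R)
    (hopt : ∀ γ' : Measure (E × E), IsProbabilityMeasure γ' →
      γ'.map Prod.fst = γ.map Prod.fst → γ'.map Prod.snd = γ.map Prod.snd →
      ∫ p, ‖p.1 - p.2‖ ∂γ ≤ ∫ p, ‖p.1 - p.2‖ ∂γ')
    (n : ℕ) (q : Fin (n+1) → E × E) (hq : ∀ i, ∀ ε > 0, 0 < γ (ball (q i) ε)) :
    ∑ i, ‖(q i).1 - (q i).2‖ ≤ ∑ i, ‖(q (i+1)).1 - (q i).2‖ := by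
  classical
  set C : E × E → ℝ := fun p => ‖p.1 - p.2‖ with hCdef
  have hCcont : Continuous C := (continuous_fst.sub continuous_snd).norm
  by_contra hcon
  push_neg at hcon
  set κ : ℝ := (∑ i, ‖(q i).1 - (q i).2‖) - ∑ i, ‖(q (i+1)).1 - (q i).2‖ with hκdef
  have hκpos : 0 < κ := by simp only [hκdef]; linarith
  have hNpos : (0:ℝ) < (n+1 : ℕ) := by positivity
  set δ : ℝ := κ / (5 * (n+1 : ℕ)) with hδdef
  have hδpos : 0 < δ := by positivity
  set B : Fin (n+1) → Set (E × E) := fun i => ball (q i) δ with hBdef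
  have hBmeas : ∀ i, MeasurableSet (B i) := fun i => measurableSet_ball
  set m : Fin (n+1) → ℝ≥0∞ := fun i => γ (B i) with hmdef
  have hm0 : ∀ i, 0 < m i := fun i => hq i δ hδpos
  have hmfin : ∀ i, m i ≠ ∞ := fun i => measure_ne_top γ _
  set mmin : ℝ≥0∞ := Finset.univ.inf' Finset.univ_nonempty m with hmmindef
  have hmmin0 : mmin ≠ 0 := by
    rw [← pos_iff_ne_zero, hmmindef, Finset.lt_inf'_iff]
    exact fun i _ => hm0 i
  have hmmin_le : ∀ i, mmin ≤ m i := fun i => Finset.inf'_le _ (Finset.mem_univ i)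
  have hmminfin : mmin ≠ ∞ := (lt_of_le_of_lt (hmmin_le 0) (hmfin 0).lt_top).ne
  have hN0 : ((n+1 : ℕ) : ℝ≥0∞) ≠ 0 := by simp
  have hNfin : ((n+1 : ℕ) : ℝ≥0∞) ≠ ∞ := by simp
  set w : Fin (n+1) → ℝ≥0∞ := fun i => mmin / (((n+1 : ℕ) : ℝ≥0∞) * m i) with hwdef
  set c : ℝ≥0∞ := mmin / ((n+1 : ℕ) : ℝ≥0∞) with hcdef
  have hc0 : c ≠ 0 := by
    rw [hcdef]
    simp [ENNReal.div_eq_zero_iff, hmmin0, hNfin]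
  have hcfin : c ≠ ∞ := by
    rw [hcdef]
    simp [ENNReal.div_eq_top, hmminfin, hN0]
  have hwm : ∀ i, w i * m i = c := by
    intro i
    rw [hwdef, hcdef]
    simp only
    rw [div_eq_mul_inv, ENNReal.mul_inv (Or.inl hN0) (Or.inl hNfin)]
    calc mmin * ((((n+1 : ℕ) : ℝ≥0∞))⁻¹ * (m i)⁻¹) * m i
        = mmin * (((n+1 : ℕ) : ℝ≥0∞))⁻¹ * ((m i)⁻¹ * m i) := by ring
      _ = mmin * (((n+1 : ℕ) : ℝ≥0∞))⁻¹ := by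
          rw [ENNReal.inv_mul_cancel (hm0 i).ne' (hmfin i), mul_one]
      _ = mmin / ((n+1 : ℕ) : ℝ≥0∞) := (div_eq_mul_inv _ _).symm
  have hw_inv : ∀ i, w i ≤ (((n+1 : ℕ) : ℝ≥0∞))⁻¹ := by
    intro i
    rw [hwdef]
    simp only
    rw [ENNReal.div_le_iff_le_mul (Or.inl (mul_ne_zero hN0 (hm0 i).ne'))
      (Or.inl (ENNReal.mul_ne_top hNfin (hmfin i)))]
    rw [← mul_assoc, ENNReal.inv_mul_cancel hN0 hNfin, one_mul]
    exact hmmin_le i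
  have hw1 : ∀ i, w i ≤ 1 := fun i => (hw_inv i).trans (ENNReal.inv_le_one.2 (by simp))
  have hwfin : ∀ i, w i ≠ ∞ := fun i => ((hw1 i).trans_lt ENNReal.one_lt_top).ne
  -- the density of the untouched part
  set ind : Fin (n+1) → (E × E) → ℝ≥0∞ := fun i => (B i).indicator (fun _ => w i) with hinddef
  have hindmeas : ∀ i, Measurable (ind i) := fun i => measurable_const.indicator (hBmeas i)
  have hind_le : ∀ i p, ind i p ≤ (((n+1 : ℕ) : ℝ≥0∞))⁻¹ := by
    intro i p
    by_cases hp : p ∈ B i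
    · rw [hinddef]; simp only [Set.indicator_of_mem hp]; exact hw_inv i
    · rw [hinddef]; simp only [Set.indicator_of_notMem hp]; exact zero_le
  set fden : (E × E) → ℝ≥0∞ := fun p => 1 - ∑ i, ind i p with hfdendef
  have hsum_le : ∀ p, ∑ i, ind i p ≤ 1 := by
    intro p
    calc ∑ i, ind i p ≤ ∑ _i : Fin (n+1), (((n+1 : ℕ) : ℝ≥0∞))⁻¹ :=
          Finset.sum_le_sum fun i _ => hind_le i p
      _ = ((n+1 : ℕ) : ℝ≥0∞) * (((n+1 : ℕ) : ℝ≥0∞))⁻¹ := by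
          simp [Finset.sum_const, Finset.card_univ, nsmul_eq_mul]
      _ = 1 := ENNReal.mul_inv_cancel hN0 hNfin
  have hsummeas : Measurable (fun p => ∑ i, ind i p) :=
    Finset.measurable_sum _ (fun i _ => hindmeas i)
  set ρ : Fin (n+1) → Measure (E × E) := fun i => w i • γ.restrict (B i) with hρdef
  have hdecomp : γ.withDensity fden + ∑ i, ρ i = γ := by
    have h1 : ∀ i, γ.withDensity (ind i) = ρ i := by
      intro i
      rw [hinddef, hρdef]
      simp only
      rw [withDensity_indicator (hBmeas i), withDensity_const]
    have hwd_sum : ∀ s : Finset (Fin (n+1)),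
        γ.withDensity (fun p => ∑ i ∈ s, ind i p) = ∑ i ∈ s, γ.withDensity (ind i) := by
      intro s
      induction s using Finset.induction with
      | empty => simp
      | insert _ _ h ih =>
        rename_i a s'
        simp only [Finset.sum_insert h]
        rw [show (fun p => ind a p + ∑ i ∈ s', ind i p)
            = ind a + (fun p => ∑ i ∈ s', ind i p) from rfl]
        rw [withDensity_add_left (hindmeas a), ih]
    calc γ.withDensity fden + ∑ i, ρ i
        = γ.withDensity fden + ∑ i, γ.withDensity (ind i) := by simp_rw [h1]
      _ = γ.withDensity fden + γ.withDensity (fun p => ∑ i, ind i p) := by rw [hwd_sum]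
      _ = γ.withDensity (fden + fun p => ∑ i, ind i p) := by
          rw [withDensity_add_right _ hsummeas]
      _ = γ.withDensity 1 := by
          congr 1
          funext p
          simp only [Pi.add_apply, Pi.one_apply, hfdendef]
          exact tsub_add_cancel_of_le (hsum_le p)
      _ = γ := withDensity_one
  -- the marginals of the pieces
  set α' : Fin (n+1) → Measure E := fun i => (γ.restrict (B i)).map Prod.fst with hα'def
  set β' : Fin (n+1) → Measure E := fun i => (γ.restrict (B i)).map Prod.snd with hβ'def
  have hα'univ : ∀ i, α' i Set.univ = m i := by
    intro i
    rw [hα'def]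
    simp only
    rw [Measure.map_apply measurable_fst MeasurableSet.univ]
    simp [hmdef]
  have hβ'univ : ∀ i, β' i Set.univ = m i := by
    intro i
    rw [hβ'def]
    simp only
    rw [Measure.map_apply measurable_snd MeasurableSet.univ]
    simp [hmdef]
  have hfinα : ∀ i, IsFiniteMeasure (α' i) := by
    intro i
    exact ⟨by rw [hα'univ]; exact (hmfin i).lt_top⟩
  have hfinβ : ∀ i, IsFiniteMeasure (β' i) := by
    intro i
    exact ⟨by rw [hβ'univ]; exact (hmfin i).lt_top⟩
  set u : Fin (n+1) → ℝ≥0∞ := fun i => w (i+1) * w i / c with hudef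
  have hufin : ∀ i, u i ≠ ∞ := by
    intro i
    exact (ENNReal.div_lt_top (ENNReal.mul_ne_top (hwfin _) (hwfin _)) hc0).ne
  have hu_m1 : ∀ i, u i * m (i+1) = w i := by
    intro i
    rw [hudef]
    simp only
    rw [div_eq_mul_inv]
    calc w (i+1) * w i * c⁻¹ * m (i+1)
        = w i * (w (i+1) * m (i+1)) * c⁻¹ := by ring
      _ = w i * c * c⁻¹ := by rw [hwm]
      _ = w i * (c * c⁻¹) := by ring
      _ = w i := by rw [ENNReal.mul_inv_cancel hc0 hcfin, mul_one]
  have hu_m0 : ∀ i, u i * m i = w (i+1) := by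
    intro i
    rw [hudef]
    simp only
    rw [div_eq_mul_inv]
    calc w (i+1) * w i * c⁻¹ * m i
        = w (i+1) * (w i * m i) * c⁻¹ := by ring
      _ = w (i+1) * c * c⁻¹ := by rw [hwm]
      _ = w (i+1) * (c * c⁻¹) := by ring
      _ = w (i+1) := by rw [ENNReal.mul_inv_cancel hc0 hcfin, mul_one]
  set τ : Fin (n+1) → Measure (E × E) := fun i => u i • ((α' (i+1)).prod (β' i)) with hτdef
  set γ' : Measure (E × E) := γ.withDensity fden + ∑ i, τ i with hγ'def
  have hmapfst_τ : ∀ i, (τ i).map Prod.fst = w (i+1) • α' (i+1) := by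
    intro i
    haveI := hfinα (i+1)
    haveI := hfinβ i
    rw [hτdef]
    simp only
    rw [Measure.map_smul, Measure.map_fst_prod, hβ'univ, smul_smul, hu_m0]
  have hmapsnd_τ : ∀ i, (τ i).map Prod.snd = w i • β' i := by
    intro i
    haveI := hfinα (i+1)
    haveI := hfinβ i
    rw [hτdef]
    simp only
    rw [Measure.map_smul, Measure.map_snd_prod, hα'univ, smul_smul, hu_m1]
  have hmapfst_ρ : ∀ i, (ρ i).map Prod.fst = w i • α' i := by
    intro i
    rw [hρdef, hα'def]
    simp only
    rw [Measure.map_smul]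
  have hmapsnd_ρ : ∀ i, (ρ i).map Prod.snd = w i • β' i := by
    intro i
    rw [hρdef, hβ'def]
    simp only
    rw [Measure.map_smul]
  have hmargfst : γ'.map Prod.fst = γ.map Prod.fst := by
    conv_rhs => rw [← hdecomp]
    rw [hγ'def, Measure.map_add _ _ measurable_fst, Measure.map_add _ _ measurable_fst,
      map_finset_sum_meas _ _ measurable_fst, map_finset_sum_meas _ _ measurable_fst]
    congr 1
    simp_rw [hmapfst_τ, hmapfst_ρ]
    exact Fintype.sum_equiv (Equiv.addRight (1 : Fin (n+1))) _ _ (fun i => rfl)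
  have hmargsnd : γ'.map Prod.snd = γ.map Prod.snd := by
    conv_rhs => rw [← hdecomp]
    rw [hγ'def, Measure.map_add _ _ measurable_snd, Measure.map_add _ _ measurable_snd,
      map_finset_sum_meas _ _ measurable_snd, map_finset_sum_meas _ _ measurable_snd]
    congr 1
    simp_rw [hmapsnd_τ, hmapsnd_ρ]
  have hprob' : IsProbabilityMeasure γ' := by
    constructor
    have h1 : γ'.map Prod.fst Set.univ = γ' Set.univ := by
      rw [Measure.map_apply measurable_fst MeasurableSet.univ]
      simp
    have h2 : γ.map Prod.fst Set.univ = γ Set.univ := by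
      rw [Measure.map_apply measurable_fst MeasurableSet.univ]
      simp
    rw [← h1, hmargfst, h2, measure_univ]
  -- integrability facts
  have hCnn : ∀ p : E × E, 0 ≤ C p := fun p => norm_nonneg _
  have hIntγ : Integrable C γ := by
    refine Integrable.mono' (integrable_const (max R 0)) hCcont.aestronglyMeasurable ?_
    filter_upwards [hbd] with p hp
    rw [Real.norm_eq_abs, abs_of_nonneg (hCnn p)]
    exact hp.trans (le_max_left _ _)
  have hle_rem : γ.withDensity fden ≤ γ := by
    conv_rhs => rw [← withDensity_one (μ := γ)]
    exact withDensity_mono (Filter.Eventually.of_forall fun p => tsub_le_self)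
  have hIntrem : Integrable C (γ.withDensity fden) :=
    ⟨hCcont.aestronglyMeasurable, hIntγ.2.mono_measure hle_rem⟩
  have hIntrestr : ∀ i, Integrable C (γ.restrict (B i)) := fun i =>
    ⟨hCcont.aestronglyMeasurable, hIntγ.2.mono_measure Measure.restrict_le_self⟩
  have hIntρ : ∀ i, Integrable C (ρ i) := by
    intro i
    rw [hρdef]
    exact (hIntrestr i).smul_measure (hwfin i)
  -- concentration of the product pieces
  have hprodconc : ∀ i, ∀ᵐ p ∂((α' (i+1)).prod (β' i)),
      C p ≤ ‖(q (i+1)).1 - (q i).2‖ + 2*δ := by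
    intro i
    haveI := hfinα (i+1)
    haveI := hfinβ i
    have h1 : (α' (i+1)) (ball (q (i+1)).1 δ)ᶜ = 0 := by
      rw [hα'def]
      simp only
      rw [Measure.map_apply measurable_fst measurableSet_ball.compl,
        Measure.restrict_apply (measurable_fst measurableSet_ball.compl)]
      have he : Prod.fst ⁻¹' (ball (q (i+1)).1 δ)ᶜ ∩ B (i+1) = ∅ := by
        ext p
        simp only [mem_inter_iff, mem_preimage, mem_compl_iff, mem_empty_iff_false, iff_false,
          not_and]
        intro hp1 hp2
        apply hp1
        have : dist p (q (i+1)) < δ := mem_ball.1 hp2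
        exact mem_ball.2 (lt_of_le_of_lt (by rw [Prod.dist_eq]; exact le_max_left _ _) this)
      rw [he, measure_empty]
    have h2 : (β' i) (ball (q i).2 δ)ᶜ = 0 := by
      rw [hβ'def]
      simp only
      rw [Measure.map_apply measurable_snd measurableSet_ball.compl,
        Measure.restrict_apply (measurable_snd measurableSet_ball.compl)]
      have he : Prod.snd ⁻¹' (ball (q i).2 δ)ᶜ ∩ B i = ∅ := by
        ext p
        simp only [mem_inter_iff, mem_preimage, mem_compl_iff, mem_empty_iff_false, iff_false,
          not_and]
        intro hp1 hp2
        apply hp1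
        have : dist p (q i) < δ := mem_ball.1 hp2
        exact mem_ball.2 (lt_of_le_of_lt (by rw [Prod.dist_eq]; exact le_max_right _ _) this)
      rw [he, measure_empty]
    have hfstae : ∀ᵐ p ∂((α' (i+1)).prod (β' i)), p.1 ∈ ball (q (i+1)).1 δ := by
      rw [ae_iff]
      have hset : {p : E × E | ¬ p.1 ∈ ball (q (i+1)).1 δ}
          = (ball (q (i+1)).1 δ)ᶜ ×ˢ (Set.univ : Set E) := by
        ext p
        simp [Set.mem_prod]
      rw [hset, Measure.prod_prod, h1, zero_mul]
    have hsndae : ∀ᵐ p ∂((α' (i+1)).prod (β' i)), p.2 ∈ ball (q i).2 δ := by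
      rw [ae_iff]
      have hset : {p : E × E | ¬ p.2 ∈ ball (q i).2 δ}
          = (Set.univ : Set E) ×ˢ (ball (q i).2 δ)ᶜ := by
        ext p
        simp [Set.mem_prod]
      rw [hset, Measure.prod_prod, h2, mul_zero]
    filter_upwards [hfstae, hsndae] with p hp1 hp2
    have e1 : ‖p.1 - (q (i+1)).1‖ ≤ δ := by
      rw [← dist_eq_norm]
      exact (mem_ball.1 hp1).le
    have e2 : ‖(q i).2 - p.2‖ ≤ δ := by
      rw [← dist_eq_norm, dist_comm]
      exact (mem_ball.1 hp2).le
    have hde : p.1 - p.2 = (p.1 - (q (i+1)).1) + ((q (i+1)).1 - (q i).2) + ((q i).2 - p.2) := by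
      abel
    have := norm_add₃_le (a := p.1 - (q (i+1)).1) (b := (q (i+1)).1 - (q i).2) (c := (q i).2 - p.2)
    have hcc : C p = ‖p.1 - p.2‖ := rfl
    rw [hcc, hde]
    linarith
  have hIntprod : ∀ i, Integrable C ((α' (i+1)).prod (β' i)) := by
    intro i
    haveI := hfinα (i+1)
    haveI := hfinβ i
    refine Integrable.mono' (integrable_const (‖(q (i+1)).1 - (q i).2‖ + 2*δ))
      hCcont.aestronglyMeasurable ?_
    filter_upwards [hprodconc i] with p hp
    rwa [Real.norm_eq_abs, abs_of_nonneg (hCnn p)]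
  have hIntτ : ∀ i, Integrable C (τ i) := by
    intro i
    rw [hτdef]
    exact (hIntprod i).smul_measure (hufin i)
  have hmassprod : ∀ i, ((α' (i+1)).prod (β' i)) Set.univ = m (i+1) * m i := by
    intro i
    haveI := hfinα (i+1)
    haveI := hfinβ i
    rw [← univ_prod_univ, Measure.prod_prod, hα'univ, hβ'univ]
  have hcostτ : ∀ i, ∫ p, C p ∂(τ i) ≤ c.toReal * (‖(q (i+1)).1 - (q i).2‖ + 2*δ) := by
    intro i
    haveI := hfinα (i+1)
    haveI := hfinβ i
    have h1 : ∫ p, C p ∂(τ i) = (u i).toReal * ∫ p, C p ∂((α' (i+1)).prod (β' i)) := by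
      rw [hτdef]
      simp only
      rw [integral_smul_measure, smul_eq_mul]
    have h2 : ∫ p, C p ∂((α' (i+1)).prod (β' i))
        ≤ (m (i+1) * m i).toReal * (‖(q (i+1)).1 - (q i).2‖ + 2*δ) := by
      have := integral_mono_ae (hIntprod i) (integrable_const _) (hprodconc i)
      rwa [integral_const, measureReal_def, hmassprod i, smul_eq_mul] at this
    rw [h1]
    calc (u i).toReal * ∫ p, C p ∂((α' (i+1)).prod (β' i))
        ≤ (u i).toReal * ((m (i+1) * m i).toReal * (‖(q (i+1)).1 - (q i).2‖ + 2*δ)) :=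
          mul_le_mul_of_nonneg_left h2 ENNReal.toReal_nonneg
      _ = (u i * (m (i+1) * m i)).toReal * (‖(q (i+1)).1 - (q i).2‖ + 2*δ) := by
          simp only [ENNReal.toReal_mul]
          ring
      _ = c.toReal * (‖(q (i+1)).1 - (q i).2‖ + 2*δ) := by
          congr 2
          rw [← mul_assoc, hu_m1, hwm]
  have hcostρ : ∀ i, c.toReal * (‖(q i).1 - (q i).2‖ - 2*δ) ≤ ∫ p, C p ∂(ρ i) := by
    intro i
    have hconc : ∀ᵐ p ∂(γ.restrict (B i)), ‖(q i).1 - (q i).2‖ - 2*δ ≤ C p := by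
      filter_upwards [ae_restrict_mem (hBmeas i)] with p hp
      have hd : dist p (q i) < δ := mem_ball.1 hp
      have hmax : max (dist p.1 (q i).1) (dist p.2 (q i).2) < δ := by
        rw [← Prod.dist_eq]; exact hd
      have e1 : ‖(q i).1 - p.1‖ ≤ δ := by
        rw [← dist_eq_norm, dist_comm]
        exact ((le_max_left _ _).trans_lt hmax).le
      have e2 : ‖p.2 - (q i).2‖ ≤ δ := by
        rw [← dist_eq_norm]
        exact ((le_max_right _ _).trans_lt hmax).le
      have hde : (q i).1 - (q i).2 = ((q i).1 - p.1) + (p.1 - p.2) + (p.2 - (q i).2) := by abel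
      have htr := norm_add₃_le (a := (q i).1 - p.1) (b := p.1 - p.2) (c := p.2 - (q i).2)
      have hcc : C p = ‖p.1 - p.2‖ := rfl
      rw [hcc]
      have : ‖(q i).1 - (q i).2‖ ≤ ‖(q i).1 - p.1‖ + ‖p.1 - p.2‖ + ‖p.2 - (q i).2‖ := by
        rw [hde]; exact htr
      linarith
    have h2 : (‖(q i).1 - (q i).2‖ - 2*δ) * (m i).toReal ≤ ∫ p, C p ∂(γ.restrict (B i)) := by
      have := integral_mono_ae (integrable_const _) (hIntrestr i) hconc
      rwa [integral_const, measureReal_def, Measure.restrict_apply_univ, smul_eq_mul, mul_comm] at this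
    have h3 : ∫ p, C p ∂(ρ i) = (w i).toReal * ∫ p, C p ∂(γ.restrict (B i)) := by
      rw [hρdef]
      simp only
      rw [integral_smul_measure, smul_eq_mul]
    rw [h3]
    have h4 : c.toReal = (w i).toReal * (m i).toReal := by
      rw [← ENNReal.toReal_mul, hwm]
    calc c.toReal * (‖(q i).1 - (q i).2‖ - 2*δ)
        = (w i).toReal * ((‖(q i).1 - (q i).2‖ - 2*δ) * (m i).toReal) := by rw [h4]; ring
      _ ≤ (w i).toReal * ∫ p, C p ∂(γ.restrict (B i)) :=
          mul_le_mul_of_nonneg_left h2 ENNReal.toReal_nonneg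
  -- split the costs
  have hsplitγ : ∫ p, C p ∂γ = ∫ p, C p ∂(γ.withDensity fden) + ∑ i, ∫ p, C p ∂(ρ i) := by
    conv_lhs => rw [← hdecomp]
    rw [integral_add_measure hIntrem (integrable_finset_sum_measure.2 fun i _ => hIntρ i),
      integral_finset_sum_measure (fun i _ => hIntρ i)]
  have hsplitγ' : ∫ p, C p ∂γ' = ∫ p, C p ∂(γ.withDensity fden) + ∑ i, ∫ p, C p ∂(τ i) := by
    rw [hγ'def, integral_add_measure hIntrem (integrable_finset_sum_measure.2 fun i _ => hIntτ i),
      integral_finset_sum_measure (fun i _ => hIntτ i)]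
  have hkey := hopt γ' hprob' hmargfst hmargsnd
  have hsum1 : ∑ i, ∫ p, C p ∂(ρ i) ≤ ∑ i, ∫ p, C p ∂(τ i) := by
    rw [hsplitγ, hsplitγ'] at hkey
    linarith
  have hlow : ∑ i : Fin (n+1), c.toReal * (‖(q i).1 - (q i).2‖ - 2*δ)
      ≤ ∑ i, ∫ p, C p ∂(ρ i) := Finset.sum_le_sum fun i _ => hcostρ i
  have hhigh : ∑ i, ∫ p, C p ∂(τ i)
      ≤ ∑ i : Fin (n+1), c.toReal * (‖(q (i+1)).1 - (q i).2‖ + 2*δ) :=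
    Finset.sum_le_sum fun i _ => hcostτ i
  have hcR : 0 < c.toReal := ENNReal.toReal_pos hc0 hcfin
  have hcard : (Finset.univ : Finset (Fin (n+1))).card = n+1 := by simp
  have hA : ∑ i : Fin (n+1), c.toReal * (‖(q i).1 - (q i).2‖ - 2*δ)
      = c.toReal * ((∑ i, ‖(q i).1 - (q i).2‖) - ((n:ℝ)+1)*(2*δ)) := by
    rw [← Finset.mul_sum, Finset.sum_sub_distrib, Finset.sum_const, hcard]
    push_cast
    ring
  have hB2 : ∑ i : Fin (n+1), c.toReal * (‖(q (i+1)).1 - (q i).2‖ + 2*δ)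
      = c.toReal * ((∑ i, ‖(q (i+1)).1 - (q i).2‖) + ((n:ℝ)+1)*(2*δ)) := by
    rw [← Finset.mul_sum, Finset.sum_add_distrib, Finset.sum_const, hcard]
    push_cast
    ring
  rw [hA] at hlow
  rw [hB2] at hhigh
  have hmain : (∑ i, ‖(q i).1 - (q i).2‖) - ((n:ℝ)+1)*(2*δ)
      ≤ (∑ i, ‖(q (i+1)).1 - (q i).2‖) + ((n:ℝ)+1)*(2*δ) := by
    have := le_trans hlow (le_trans hsum1 hhigh)
    exact le_of_mul_le_mul_left (by linarith) hcR
  have hδval : ((n:ℝ)+1) * δ = κ/5 := by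
    rw [hδdef]
    push_cast
    field_simp
  rw [hκdef] at hκpos
  nlinarith [hmain, hδval, hκpos]


lemma ray_ae {Ω : Set E} (hΩc : IsCompact Ω)
    {μ ν : Measure E} [IsProbabilityMeasure μ] [IsProbabilityMeasure ν]
    (hμΩ : μ Ωᶜ = 0) (hνΩ : ν Ωᶜ = 0)
    {u0 : E → ℝ} (hu0 : IsKantorovichPotential Ω μ ν u0)
    {T0 : E → E} (hT0 : IsOptimalMap Ω μ ν T0) :
    ∀ᵐ x ∂μ, u0 x - u0 (T0 x) = ‖x - T0 x‖ := by
  obtain ⟨hT0m, hmaps, hmap, hcost⟩ := hT0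
  have haeΩ : ∀ᵐ x ∂μ, x ∈ Ω := by
    rw [ae_iff]
    exact hμΩ
  have haeΩν : ∀ᵐ x ∂ν, x ∈ Ω := by
    rw [ae_iff]
    exact hνΩ
  have hΩmeas : MeasurableSet Ω := hΩc.isClosed.measurableSet
  obtain ⟨R, hRsub⟩ := hΩc.isBounded.subset_closedBall 0
  have hR : ∀ x ∈ Ω, ‖x‖ ≤ R := fun x hx => by
    simpa using mem_closedBall_zero_iff.1 (hRsub hx)
  set γ0 : Measure (E × E) := μ.map (fun x => (x, T0 x)) with hγ0def
  have hpair : Measurable (fun x : E => (x, T0 x)) := measurable_id.prodMk hT0m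
  haveI : IsProbabilityMeasure γ0 := Measure.isProbabilityMeasure_map hpair.aemeasurable
  have hfst : γ0.map Prod.fst = μ := by
    rw [hγ0def, Measure.map_map measurable_fst hpair]
    have hid : (Prod.fst ∘ fun x : E => (x, T0 x)) = id := rfl
    rw [hid, Measure.map_id]
  have hsnd : γ0.map Prod.snd = ν := by
    rw [hγ0def, Measure.map_map measurable_snd hpair]
    exact hmap
  have hγ0Ω : γ0 ((Ω ×ˢ Ω)ᶜ) = 0 := by
    rw [hγ0def, Measure.map_apply hpair (hΩmeas.prod hΩmeas).compl]
    apply measure_mono_null _ hμΩ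
    intro x hx
    simp only [mem_preimage, mem_compl_iff, mem_prod] at hx ⊢
    intro hxΩ
    exact hx ⟨hxΩ, hmaps hxΩ⟩
  have haeΩΩ : ∀ᵐ p ∂γ0, p ∈ Ω ×ˢ Ω := by
    rw [ae_iff]
    exact hγ0Ω
  have hbd : ∀ᵐ p ∂γ0, ‖p.1 - p.2‖ ≤ R + R := by
    filter_upwards [haeΩΩ] with p hp
    exact (norm_sub_le p.1 p.2).trans (add_le_add (hR _ hp.1) (hR _ hp.2))
  have hcost0 : ∫ p, ‖p.1 - p.2‖ ∂γ0 = ∫ x, ‖x - T0 x‖ ∂μ := by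
    rw [hγ0def, integral_map (f := fun p : E × E => ‖p.1 - p.2‖) hpair.aemeasurable
      ((continuous_fst.sub continuous_snd).norm).aestronglyMeasurable]
  have hbddbelow : BddBelow {c | ∃ γ : Measure (E × E), IsProbabilityMeasure γ ∧
      γ.map Prod.fst = μ ∧ γ.map Prod.snd = ν ∧ c = ∫ p, ‖p.1 - p.2‖ ∂γ} := by
    refine ⟨0, ?_⟩
    rintro r ⟨γ, hγ, h1, h2, rfl⟩
    exact integral_nonneg fun p => norm_nonneg _
  have hopt : ∀ γ' : Measure (E × E), IsProbabilityMeasure γ' →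
      γ'.map Prod.fst = γ0.map Prod.fst → γ'.map Prod.snd = γ0.map Prod.snd →
      ∫ p, ‖p.1 - p.2‖ ∂γ0 ≤ ∫ p, ‖p.1 - p.2‖ ∂γ' := by
    intro γ' h1 h2 h3
    rw [hfst] at h2
    rw [hsnd] at h3
    rw [hcost0, hcost]
    exact csInf_le hbddbelow ⟨γ', h1, h2, h3, rfl⟩
  set Sbad := {p : E × E | ∃ ε > 0, γ0 (ball p ε) = 0} with hSbaddef
  set S := (Ω ×ˢ Ω) ∩ Sbadᶜ with hSdef
  have hSbadopen : IsOpen Sbad := by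
    rw [Metric.isOpen_iff]
    rintro p ⟨ε, hε, hball⟩
    refine ⟨ε/2, by linarith, ?_⟩
    intro p' hp'
    refine ⟨ε/2, by linarith, ?_⟩
    apply measure_mono_null _ hball
    intro z hz
    have h1 : dist z p' < ε/2 := mem_ball.1 hz
    have h2 : dist p' p < ε/2 := mem_ball.1 hp'
    exact mem_ball.2 (by calc dist z p ≤ dist z p' + dist p' p := dist_triangle _ _ _
      _ < ε/2 + ε/2 := by linarith
      _ = ε := by ring)
  have hScompl : γ0 Sᶜ = 0 := by
    have hsub : Sᶜ ⊆ (Ω ×ˢ Ω)ᶜ ∪ Sbad := by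
      intro p hp
      rw [hSdef] at hp
      simp only [compl_inter, mem_union, mem_compl_iff, compl_compl] at hp ⊢
      tauto
    exact measure_mono_null hsub (measure_union_null hγ0Ω (null_bad_set γ0))
  have haeS : ∀ᵐ x ∂μ, (x, T0 x) ∈ S := by
    have hSmeasc : MeasurableSet Sᶜ :=
      ((hΩmeas.prod hΩmeas).inter hSbadopen.isClosed_compl.measurableSet).compl
    rw [ae_iff]
    have heq : {x | ¬ (x, T0 x) ∈ S} = (fun x : E => (x, T0 x)) ⁻¹' Sᶜ := rfl
    rw [heq, ← Measure.map_apply hpair hSmeasc, ← hγ0def, hScompl]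
  have hSne : S.Nonempty := by
    by_contra h
    rw [not_nonempty_iff_eq_empty] at h
    have h0 : γ0 Set.univ = 0 := by
      rw [← compl_empty, ← h]
      exact hScompl
    simp [measure_univ] at h0
  obtain ⟨p0, hp0⟩ := hSne
  have ha0 : p0.1 ∈ Ω := hp0.1.1
  -- chain form of cyclical monotonicity
  have hcm : ∀ (k : ℕ) (qc : ℕ → E × E), (∀ i ≤ k, qc i ∈ S) → qc 0 = p0 →
      ∑ i ∈ Finset.range (k+1), ‖(qc i).1 - (qc i).2‖ ≤
        (∑ i ∈ Finset.range k, ‖(qc (i+1)).1 - (qc i).2‖) + ‖(qc 0).1 - (qc k).2‖ := by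
    intro k qc hqc hq0
    have hball : ∀ i : Fin (k+1), ∀ ε > 0, 0 < γ0 (ball ((fun j : Fin (k+1) => qc (j : ℕ)) i) ε) := by
      intro i ε hε
      have hiS : qc (i : ℕ) ∈ S := hqc _ (Nat.lt_succ_iff.1 i.isLt)
      have hnb : (qc (i : ℕ)) ∉ Sbad := hiS.2
      rw [pos_iff_ne_zero]
      intro hzero
      exact hnb ⟨ε, hε, hzero⟩
    have hfin := cm_of_optimal hbd hopt k (fun j : Fin (k+1) => qc (j : ℕ)) hball
    have hLHS : ∑ i : Fin (k+1), ‖(qc (i : ℕ)).1 - (qc (i : ℕ)).2‖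
        = ∑ i ∈ Finset.range (k+1), ‖(qc i).1 - (qc i).2‖ :=
      Fin.sum_univ_eq_sum_range (fun j => ‖(qc j).1 - (qc j).2‖) (k+1)
    have hRHS : ∑ i : Fin (k+1), ‖(qc (((i+1 : Fin (k+1))) : ℕ)).1 - (qc (i : ℕ)).2‖
        = (∑ i ∈ Finset.range k, ‖(qc (i+1)).1 - (qc i).2‖) + ‖(qc 0).1 - (qc k).2‖ := by
      rw [Fin.sum_univ_castSucc]
      congr 1
      · rw [← Fin.sum_univ_eq_sum_range (fun j => ‖(qc (j+1)).1 - (qc j).2‖) k]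
        apply Finset.sum_congr rfl
        intro j _
        have hne : (Fin.castSucc j) ≠ Fin.last k := by
          simp only [ne_eq, Fin.ext_iff, Fin.coe_castSucc, Fin.val_last]
          omega
        have h1 : (((Fin.castSucc j) + 1 : Fin (k+1)) : ℕ) = (j : ℕ) + 1 := by
          rw [Fin.val_add_one]
          simp [hne]
        have h2 : ((Fin.castSucc j : Fin (k+1)) : ℕ) = (j : ℕ) := Fin.coe_castSucc j
        rw [h1, h2]
      · have h1 : ((Fin.last k + 1 : Fin (k+1)) : ℕ) = 0 := by
          rw [Fin.last_add_one]
          rfl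
        have h2 : ((Fin.last k : Fin (k+1)) : ℕ) = k := Fin.val_last k
        rw [h1, h2]
    rw [hLHS, hRHS] at hfin
    exact hfin
  obtain ⟨φ, hφlip, hφS⟩ := exists_potential S p0 hp0 hcm
  -- extension of u0
  obtain ⟨ut, hutlip, hutEq⟩ := hu0.1.extend_real
  have hu0aeμ : u0 =ᵐ[μ] ut := by
    filter_upwards [haeΩ] with x hx
    exact hutEq hx
  have hu0aeν : u0 =ᵐ[ν] ut := by
    filter_upwards [haeΩν] with x hx
    exact hutEq hx
  -- integrability
  have hcu : Continuous ut := hutlip.continuous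
  have hcφ : Continuous φ := hφlip.continuous
  have hsmu0μ : AEStronglyMeasurable u0 μ := hcu.aestronglyMeasurable.congr hu0aeμ.symm
  have hsmu0ν : AEStronglyMeasurable u0 ν := hcu.aestronglyMeasurable.congr hu0aeν.symm
  have hboundu0 : ∀ x ∈ Ω, ‖u0 x‖ ≤ |u0 p0.1| + (R + R) := by
    intro x hx
    have h1 := sub_le_of_lipOn hu0.1 hx ha0
    have h2 := sub_le_of_lipOn hu0.1 ha0 hx
    have h3 : ‖x - p0.1‖ ≤ R + R := (norm_sub_le x p0.1).trans (add_le_add (hR x hx) (hR _ ha0))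
    have h4 : ‖p0.1 - x‖ = ‖x - p0.1‖ := norm_sub_rev _ _
    rw [Real.norm_eq_abs, abs_le]
    constructor
    · linarith [neg_abs_le (u0 p0.1)]
    · linarith [le_abs_self (u0 p0.1)]
  have hintu0μ : Integrable u0 μ := by
    refine Integrable.mono' (integrable_const (|u0 p0.1| + (R + R))) hsmu0μ ?_
    filter_upwards [haeΩ] with x hx
    exact hboundu0 x hx
  have hintu0ν : Integrable u0 ν := by
    refine Integrable.mono' (integrable_const (|u0 p0.1| + (R + R))) hsmu0ν ?_
    filter_upwards [haeΩν] with x hx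
    exact hboundu0 x hx
  have haeT0Ω : ∀ᵐ x ∂μ, T0 x ∈ Ω := by
    filter_upwards [haeΩ] with x hx
    exact hmaps hx
  have hsmu0T0 : AEStronglyMeasurable (fun x => u0 (T0 x)) μ := by
    refine (hcu.measurable.comp hT0m).aestronglyMeasurable.congr ?_
    filter_upwards [haeT0Ω] with x hx
    exact (hutEq hx).symm
  have hintu0T0 : Integrable (fun x => u0 (T0 x)) μ := by
    refine Integrable.mono' (integrable_const (|u0 p0.1| + (R + R))) hsmu0T0 ?_
    filter_upwards [haeT0Ω] with x hx
    exact hboundu0 _ hx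
  have hboundφ : ∀ x ∈ Ω, ‖φ x‖ ≤ |φ p0.1| + (R + R) := by
    intro x hx
    have h1 := hφlip.dist_le_mul x p0.1
    rw [NNReal.coe_one, one_mul, Real.dist_eq, dist_eq_norm] at h1
    have h3 : ‖x - p0.1‖ ≤ R + R := (norm_sub_le x p0.1).trans (add_le_add (hR x hx) (hR _ ha0))
    rw [Real.norm_eq_abs]
    have h5 := abs_le.1 (h1.trans h3)
    rw [abs_le]
    constructor
    · linarith [neg_abs_le (φ p0.1)]
    · linarith [le_abs_self (φ p0.1)]
  have hsmφμ : AEStronglyMeasurable φ μ := hcφ.aestronglyMeasurable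
  have hintφμ : Integrable φ μ := by
    refine Integrable.mono' (integrable_const (|φ p0.1| + (R + R))) hsmφμ ?_
    filter_upwards [haeΩ] with x hx
    exact hboundφ x hx
  have hintφT0 : Integrable (fun x => φ (T0 x)) μ := by
    refine Integrable.mono' (integrable_const (|φ p0.1| + (R + R)))
      (hcφ.measurable.comp hT0m).aestronglyMeasurable ?_
    filter_upwards [haeT0Ω] with x hx
    exact hboundφ _ hx
  have hintnorm : Integrable (fun x => ‖x - T0 x‖) μ := by
    refine Integrable.mono' (integrable_const (R + R))
      (measurable_id.sub hT0m).norm.aestronglyMeasurable ?_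
    filter_upwards [haeΩ, haeT0Ω] with x hx hx2
    rw [Real.norm_eq_abs, abs_of_nonneg (norm_nonneg _)]
    exact (norm_sub_le x (T0 x)).trans (add_le_add (hR x hx) (hR _ hx2))
  -- pushforward integral identities
  have hmapu0 : ∫ x, u0 x ∂ν = ∫ x, u0 (T0 x) ∂μ := by
    rw [← hmap]
    rw [integral_map hT0m.aemeasurable]
    rw [hmap]
    exact hsmu0ν
  have hmapφ : ∫ x, φ x ∂ν = ∫ x, φ (T0 x) ∂μ := by
    rw [← hmap, integral_map hT0m.aemeasurable]
    exact hcφ.aestronglyMeasurable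
  -- the dual value of φ dominates the cost
  have h1 : ∫ x, ‖x - T0 x‖ ∂μ ≤ ∫ x, φ x ∂μ - ∫ x, φ x ∂ν := by
    rw [hmapφ, ← integral_sub hintφμ hintφT0]
    refine integral_mono_ae hintnorm (hintφμ.sub hintφT0) ?_
    filter_upwards [haeS] with x hx
    exact hφS (x, T0 x) hx
  -- the dual value of u0 is below the cost
  have h2 : ∫ x, u0 x ∂μ - ∫ x, u0 x ∂ν ≤ ∫ x, ‖x - T0 x‖ ∂μ := by
    rw [hmapu0, ← integral_sub hintu0μ hintu0T0]
    refine integral_mono_ae (hintu0μ.sub hintu0T0) hintnorm ?_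
    filter_upwards [haeΩ, haeT0Ω] with x hx hx2
    exact sub_le_of_lipOn hu0.1 hx hx2
  have hKP := hu0.2 φ (hφlip.lipschitzOnWith (s := Ω))
  have hchain : ∫ x, (u0 x - u0 (T0 x)) ∂μ = ∫ x, ‖x - T0 x‖ ∂μ := by
    have he : ∫ x, (u0 x - u0 (T0 x)) ∂μ = ∫ x, u0 x ∂μ - ∫ x, u0 x ∂ν := by
      rw [hmapu0, integral_sub hintu0μ hintu0T0]
    rw [he]
    exact le_antisymm h2 (h1.trans hKP)
  -- conclude pointwise a.e.
  have hintsub : Integrable (fun x => ‖x - T0 x‖ - (u0 x - u0 (T0 x))) μ :=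
    hintnorm.sub (hintu0μ.sub hintu0T0)
  have hnn : 0 ≤ᵐ[μ] (fun x => ‖x - T0 x‖ - (u0 x - u0 (T0 x))) := by
    filter_upwards [haeΩ, haeT0Ω] with x hx hx2
    have := sub_le_of_lipOn hu0.1 hx hx2
    simp only [Pi.zero_apply]
    linarith
  have hzero : ∫ x, (‖x - T0 x‖ - (u0 x - u0 (T0 x))) ∂μ = 0 := by
    have hg : Integrable (fun x => u0 x - u0 (T0 x)) μ := hintu0μ.sub hintu0T0
    rw [integral_sub hintnorm hg, hchain, sub_self]
  have hae0 := (integral_eq_zero_iff_of_nonneg_ae hnn hintsub).1 hzero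
  filter_upwards [hae0] with x hx
  simp only [Pi.zero_apply] at hx
  linarith

end Aux

set_option maxHeartbeats 1000000 in
theorem stmt14 {d : ℕ} (hd : 1 ≤ d) (Ω : Set (EuclideanSpace ℝ (Fin d)))
    (hΩc : IsCompact Ω) (hΩv : Convex ℝ Ω)
    (μ ν : Measure (EuclideanSpace ℝ (Fin d)))
    [IsProbabilityMeasure μ] [IsProbabilityMeasure ν]
    (hμΩ : μ Ωᶜ = 0) (hνΩ : ν Ωᶜ = 0) (hac : μ ≪ volume)
    (u0 : EuclideanSpace ℝ (Fin d) → ℝ) (hu0 : IsKantorovichPotential Ω μ ν u0)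
    (T0 : EuclideanSpace ℝ (Fin d) → EuclideanSpace ℝ (Fin d))
    (hT0 : IsOptimalMap Ω μ ν T0)
    (η : ℝ) (hη : 0 ≤ η)
    (hηess : η < sSup {ℓ : ℝ | μ {x | ‖x - T0 x‖ < ℓ} = 0}) :
    ∀ᵐ x0 ∂μ, ∃ g : EuclideanSpace ℝ (Fin d), HasGradientWithinAt u0 g Ω x0 ∧
      x0 - η • g ∈ Ω ∧
      ∀ x ∈ Ω, x ≠ x0 - η • g →
        (1 : ℝ) / 2 * ‖(x0 - η • g) - x0‖ ^ 2 + η * u0 (x0 - η • g) <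
          (1 : ℝ) / 2 * ‖x - x0‖ ^ 2 + η * u0 x := by
  -- a.e. interior point
  have hfr : μ (frontier Ω) = 0 := hac (hΩv.addHaar_frontier volume)
  have hint : ∀ᵐ x0 ∂μ, x0 ∈ interior Ω := by
    rw [ae_iff]
    apply measure_mono_null _ (measure_union_null hfr hμΩ)
    intro x hx
    simp only [mem_setOf_eq] at hx
    by_cases hxΩ : x ∈ Ω
    · exact Or.inl ⟨subset_closure hxΩ, hx⟩
    · exact Or.inr hxΩ
  -- Rademacher for a Lipschitz extension
  obtain ⟨ut, hutlip, hutEq⟩ := hu0.1.extend_real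
  have hdiffvol : ∀ᵐ x ∂(volume : Measure (EuclideanSpace ℝ (Fin d))),
      DifferentiableAt ℝ ut x := hutlip.ae_differentiableAt
  have hdiff : ∀ᵐ x ∂μ, DifferentiableAt ℝ ut x := hdiffvol.filter_mono hac.ae_le
  -- rays
  have hray := ray_ae hΩc hμΩ hνΩ hu0 hT0
  -- essential infimum bound
  have hset0 : (0:ℝ) ∈ {ℓ : ℝ | μ {x | ‖x - T0 x‖ < ℓ} = 0} := by
    simp only [mem_setOf_eq]
    convert measure_empty
    · ext x
      simp [(norm_nonneg _).not_gt]
    · infer_instance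
  obtain ⟨ℓ, hℓmem, hηℓ⟩ := exists_lt_of_lt_csSup ⟨0, hset0⟩ hηess
  have hℓae : ∀ᵐ x ∂μ, ℓ ≤ ‖x - T0 x‖ := by
    rw [ae_iff]
    have hsetEq : {x : EuclideanSpace ℝ (Fin d) | ¬ ℓ ≤ ‖x - T0 x‖}
        = {x | ‖x - T0 x‖ < ℓ} := by
      ext x
      simp [not_le]
    rw [hsetEq]
    exact hℓmem
  filter_upwards [hint, hdiff, hray, hℓae] with x0 hx0i hx0d hx0r hx0ℓ
  have hx0Ω : x0 ∈ Ω := interior_subset hx0i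
  have hyΩ : T0 x0 ∈ Ω := hT0.2.1 hx0Ω
  have hr : η < ‖x0 - T0 x0‖ := lt_of_lt_of_le hηℓ hx0ℓ
  have hr0 : 0 < ‖x0 - T0 x0‖ := lt_of_le_of_lt hη hr
  set y := T0 x0 with hydef
  set r : ℝ := ‖x0 - y‖ with hrdef
  set e : EuclideanSpace ℝ (Fin d) := r⁻¹ • (x0 - y) with hedef
  have he1 : ‖e‖ = 1 := by
    rw [hedef, norm_smul, Real.norm_eq_abs, abs_of_pos (inv_pos.2 hr0), ← hrdef]
    field_simp
  have hseg : ∀ t, 0 ≤ t → t ≤ r → (x0 - t • e ∈ Ω ∧ u0 (x0 - t • e) = u0 x0 - t) := by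
    intro t ht0 htr
    have hz : x0 - t • e = (1 - t/r) • x0 + (t/r) • y := by
      rw [hedef, smul_smul, div_eq_mul_inv]
      module
    have hzΩ : x0 - t • e ∈ Ω := by
      rw [hz]
      refine hΩv hx0Ω hyΩ ?_ ?_ ?_
      · have := (div_le_one hr0).2 htr
        linarith
      · positivity
      · ring
    have hnx0z : ‖x0 - (x0 - t • e)‖ = t := by
      have hre : x0 - (x0 - t • e) = t • e := by module
      rw [hre, norm_smul, he1, Real.norm_eq_abs, abs_of_nonneg ht0, mul_one]
    have hzy : ‖(x0 - t • e) - y‖ = r - t := by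
      have hre : (x0 - t • e) - y = (1 - t * r⁻¹) • (x0 - y) := by
        rw [hedef]
        module
      rw [hre, norm_smul, Real.norm_eq_abs, ← hrdef]
      have h1 : (1 - t * r⁻¹) ≥ 0 := by
        have := (div_le_one hr0).2 htr
        rw [div_eq_mul_inv] at this
        linarith
      rw [abs_of_nonneg h1]
      field_simp
    have l1 := sub_le_of_lipOn hu0.1 hx0Ω hzΩ
    have l2 := sub_le_of_lipOn hu0.1 hzΩ hyΩ
    rw [hnx0z] at l1
    rw [hzy] at l2
    exact ⟨hzΩ, by linarith [hx0r]⟩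
  set L := fderiv ℝ ut x0 with hLdef
  have hfd : HasFDerivAt ut L x0 := hx0d.hasFDerivAt
  have hLe : L (-e) = -1 := by
    refine deriv_dir hr0 hfd ?_
    intro t ht
    obtain ⟨hzΩ, hzval⟩ := hseg t ht.1 ht.2
    have hre : x0 + t • (-e) = x0 - t • e := by module
    rw [hre, ← hutEq hzΩ, ← hutEq hx0Ω] at *
    rw [hzval]
    ring
  have hLe1 : L e = 1 := by
    have := map_neg L e
    rw [this] at hLe
    linarith
  have hLnorm : ‖L‖ ≤ 1 := by
    have := hfd.le_of_lipschitz hutlip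
    simpa using this
  set g : EuclideanSpace ℝ (Fin d) := (InnerProductSpace.toDual ℝ _).symm L with hgdef
  have hgL : ∀ v : EuclideanSpace ℝ (Fin d), (inner ℝ g v : ℝ) = L v := fun v =>
    InnerProductSpace.toDual_symm_apply
  have hgnorm : ‖g‖ ≤ 1 := by
    rw [hgdef, LinearIsometryEquiv.norm_map]
    exact hLnorm
  have hge : g = e := by
    have h1 : (inner ℝ g e : ℝ) = 1 := by rw [hgL]; exact hLe1
    have h2 : ‖g - e‖^2 = ‖g‖^2 - 2 * (inner ℝ g e : ℝ) + ‖e‖^2 := norm_sub_sq_real g e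
    have h3 : ‖g - e‖^2 ≤ 0 := by
      rw [h2, h1, he1]
      nlinarith [norm_nonneg g]
    have h4 : ‖g - e‖ = 0 := by
      nlinarith [norm_nonneg (g - e)]
    exact sub_eq_zero.1 (norm_eq_zero.1 h4)
  have hgrad : HasGradientWithinAt u0 g Ω x0 := by
    have h1 : HasFDerivWithinAt ut L Ω x0 := hfd.hasFDerivWithinAt
    have h2 : HasFDerivWithinAt u0 L Ω x0 :=
      h1.congr (fun z hz => hutEq hz) (hutEq hx0Ω)
    show HasFDerivWithinAt u0 ((InnerProductSpace.toDual ℝ _) g) Ω x0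
    rw [hgdef, LinearIsometryEquiv.apply_symm_apply]
    exact h2
  refine ⟨g, hgrad, ?_, ?_⟩
  · rw [hge]
    exact (hseg η hη hr.le).1
  · intro x hx hxne
    have hx1 : u0 (x0 - η • g) = u0 x0 - η := by
      rw [hge]
      exact (hseg η hη hr.le).2
    have hx1n : ‖(x0 - η • g) - x0‖ = η := by
      have hre : (x0 - η • g) - x0 = -(η • g) := by module
      rw [hre, norm_neg, norm_smul, hge, he1, Real.norm_eq_abs, abs_of_nonneg hη, mul_one]
    rw [hx1n, hx1]
    have hlip_x : u0 x0 - u0 x ≤ ‖x - x0‖ := by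
      have := sub_le_of_lipOn hu0.1 hx0Ω hx
      rwa [norm_sub_rev] at this
    by_cases hcase : ‖x - x0‖ = η
    · have hη0 : 0 < η := by
        rcases eq_or_lt_of_le hη with h0 | h0
        · exfalso
          apply hxne
          have hx0eq : x = x0 := by
            have : ‖x - x0‖ = 0 := by rw [hcase, ← h0]
            exact sub_eq_zero.1 (norm_eq_zero.1 this)
          rw [hx0eq, ← h0]
          simp
        · exact h0
      have hlow : u0 x0 - η ≤ u0 x := by linarith
      rcases lt_or_eq_of_le hlow with hgt | heq
      · rw [hcase]
        have : η * (u0 x0 - η) < η * u0 x := mul_lt_mul_of_pos_left hgt hη0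
        linarith
      · exfalso
        set v := x - x0 with hvdef
        have hvn : ‖v‖ = η := hcase
        have hwt : ∀ t ∈ Icc (0:ℝ) 1, ut (x0 + t • v) = ut x0 + t * (-η) := by
          rintro t ⟨ht0, ht1⟩
          have hmem : x0 + t • v ∈ Ω := by
            have hre : x0 + t • v = (1 - t) • x0 + t • x := by rw [hvdef]; module
            rw [hre]
            exact hΩv hx0Ω hx (by linarith) ht0 (by ring)
          have e1 : u0 x0 - u0 (x0 + t • v) ≤ t * η := by
            have h5 := sub_le_of_lipOn hu0.1 hx0Ω hmem
            have hn : ‖x0 - (x0 + t • v)‖ = t * η := by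
              have hre : x0 - (x0 + t • v) = -(t • v) := by module
              rw [hre, norm_neg, norm_smul, hvn, Real.norm_eq_abs, abs_of_nonneg ht0]
            rwa [hn] at h5
          have e2 : u0 (x0 + t • v) - u0 x ≤ (1 - t) * η := by
            have h5 := sub_le_of_lipOn hu0.1 hmem hx
            have hn : ‖(x0 + t • v) - x‖ = (1 - t) * η := by
              have hre : (x0 + t • v) - x = -((1 - t) • v) := by rw [hvdef]; module
              rw [hre, norm_neg, norm_smul, hvn, Real.norm_eq_abs,
                abs_of_nonneg (by linarith : (0:ℝ) ≤ 1 - t)]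
            rwa [hn] at h5
          have hval : u0 (x0 + t • v) = u0 x0 - t * η := by
            have hub : u0 (x0 + t • v) ≤ u0 x0 - t * η := by
              have : u0 x = u0 x0 - η := heq.symm
              linarith
            have hlb : u0 x0 - t * η ≤ u0 (x0 + t • v) := by linarith
            linarith
          rw [← hutEq hmem, ← hutEq hx0Ω, hval]
          ring
        have hLv : L v = -η := deriv_dir one_pos hfd hwt
        have hinner : (inner ℝ g v : ℝ) = -η := by rw [hgL]; exact hLv
        have hnormsum : ‖v + η • g‖^2 = 0 := by
          have hexp : ‖v + η • g‖^2 = ‖v‖^2 + 2 * (inner ℝ v (η • g) : ℝ) + ‖η • g‖^2 :=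
            norm_add_sq_real v (η • g)
          have h5 : (inner ℝ v (η • g) : ℝ) = η * (inner ℝ g v : ℝ) := by
            rw [real_inner_smul_right, real_inner_comm]
          have h6 : ‖η • g‖ = η := by
            rw [norm_smul, hge, he1, Real.norm_eq_abs, abs_of_nonneg hη, mul_one]
          rw [hexp, h5, hinner, h6, hvn]
          ring
        have hzero : v + η • g = 0 := by
          have h7 : ‖v + η • g‖ = 0 := by
            have := sq_nonneg ‖v + η • g‖
            nlinarith [norm_nonneg (v + η • g)]
          exact norm_eq_zero.1 h7
        apply hxne
        have : x = x0 + v := by rw [hvdef]; module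
        rw [this]
        have h8 : v = -(η • g) := by
          rw [← sub_eq_zero]
          rw [sub_neg_eq_add]
          exact hzero
        rw [h8]
        module
    · have h1 : u0 x0 - ‖x - x0‖ ≤ u0 x := by linarith
      have h2 : 0 < (‖x - x0‖ - η)^2 := by
        have := sub_ne_zero.2 hcase
        positivity
      nlinarith [mul_le_mul_of_nonneg_left h1 hη]
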